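/- Suppose in addition that γ := max_{i=1,2} sup_{x₁∈ℝ} |f_i''(x₁) f(x₁)| < ∞. Then there exists a constant C(ε,γ) > 0 depending only on ε, γ, μ, β such that for all a < b: ∫_{Ω_{a,b}} ( |∇g|² + |g|⁴ ) dx ≤ C(ε,γ) (Φ² + Φ⁴) ∫_a^b f(x₁)^{−3} dx₁. -/

import Mathlib

open MeasureTheory Set Filter Topology ContinuousLinearMap
set_option maxHeartbeats 1000000

/-- The channel piece `Ω_{a,b} = {x ∈ Ω : a < x₁ < b}` where
`Ω = {(x₁,x₂) : f₁(x₁) < x₂ < f₂(x₁)}`. -/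
def chan (f₁ f₂ : ℝ → ℝ) (a b : ℝ) : Set (ℝ × ℝ) :=
  {x : ℝ × ℝ | a < x.1 ∧ x.1 < b ∧ f₁ x.1 < x.2 ∧ x.2 < f₂ x.1}

/-- The stream function `G` of the flux carrier. -/
noncomputable def Gfun (μ f₁ f₂ : ℝ → ℝ) (ε Φ : ℝ) (x : ℝ × ℝ) : ℝ :=
  if (f₁ x.1 + f₂ x.1) / 2 < x.2 then
    Φ * μ (1 + ε * Real.log ((f₂ x.1 - x.2) / (x.2 - (f₁ x.1 + f₂ x.1) / 2)))
  else 0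

/-- The first component `g₁ = ∂_{x₂} G` of the flux carrier. -/
noncomputable def gfun₁ (μ f₁ f₂ : ℝ → ℝ) (ε Φ : ℝ) (x : ℝ × ℝ) : ℝ :=
  fderiv ℝ (Gfun μ f₁ f₂ ε Φ) x (0, 1)

/-- The second component `g₂ = −∂_{x₁} G` of the flux carrier. -/
noncomputable def gfun₂ (μ f₁ f₂ : ℝ → ℝ) (ε Φ : ℝ) (x : ℝ × ℝ) : ℝ :=
  -(fderiv ℝ (Gfun μ f₁ f₂ ε Φ) x (1, 0))



lemma aux_zero_Iic {G : ℝ → ℝ} (hG : Continuous G) (h : ∀ t < (0:ℝ), G t = 0) :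
    ∀ t ≤ (0:ℝ), G t = 0 := by
  intro t ht
  have hsub : Iic (0:ℝ) ⊆ G ⁻¹' {0} := by
    rw [← closure_Iio]
    exact closure_minimal (fun s hs => h s hs) (isClosed_singleton.preimage hG)
  exact hsub ht

lemma aux_zero_Ici {G : ℝ → ℝ} (hG : Continuous G) (h : ∀ t, (1:ℝ) < t → G t = 0) :
    ∀ t, (1:ℝ) ≤ t → G t = 0 := by
  intro t ht
  have hsub : Ici (1:ℝ) ⊆ G ⁻¹' {0} := by
    rw [← closure_Ioi]
    exact closure_minimal (fun s hs => h s hs) (isClosed_singleton.preimage hG)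
  exact hsub ht

lemma mu_derivs_zero {μ : ℝ → ℝ} (hμsmooth : ContDiff ℝ (⊤ : ℕ∞) μ)
    (hμ₁ : ∀ t : ℝ, t ≤ 0 → μ t = 1) (hμ₀ : ∀ t : ℝ, 1 ≤ t → μ t = 0) :
    ∀ t : ℝ, (t ≤ 0 ∨ 1 ≤ t) → deriv μ t = 0 ∧ deriv (deriv μ) t = 0 := by
  have hcd := contDiff_infty_iff_deriv.mp hμsmooth
  have hcd2 := contDiff_infty_iff_deriv.mp hcd.2
  have hev1 : ∀ t < (0:ℝ), μ =ᶠ[𝓝 t] fun _ => (1:ℝ) := by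
    intro t ht
    filter_upwards [Iio_mem_nhds ht] with s hs using hμ₁ s (le_of_lt hs)
  have hev0 : ∀ t, (1:ℝ) < t → μ =ᶠ[𝓝 t] fun _ => (0:ℝ) := by
    intro t ht
    filter_upwards [Ioi_mem_nhds ht] with s hs using hμ₀ s (le_of_lt hs)
  have hd1 : ∀ t < (0:ℝ), deriv μ t = 0 := by
    intro t ht; rw [(hev1 t ht).deriv_eq]; simp
  have hd0 : ∀ t, (1:ℝ) < t → deriv μ t = 0 := by
    intro t ht; rw [(hev0 t ht).deriv_eq]; simp
  have hdd1 : ∀ t < (0:ℝ), deriv (deriv μ) t = 0 := by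
    intro t ht
    rw [((hev1 t ht).deriv).deriv_eq]
    have : deriv (fun _ : ℝ => (1:ℝ)) = fun _ => (0:ℝ) := by funext s; simp
    rw [this]; simp
  have hdd0 : ∀ t, (1:ℝ) < t → deriv (deriv μ) t = 0 := by
    intro t ht
    rw [((hev0 t ht).deriv).deriv_eq]
    have : deriv (fun _ : ℝ => (0:ℝ)) = fun _ => (0:ℝ) := by funext s; simp
    rw [this]; simp
  intro t ht
  rcases ht with ht | ht
  · exact ⟨aux_zero_Iic hcd.2.continuous hd1 t ht,
      aux_zero_Iic hcd2.2.continuous hdd1 t ht⟩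
  · exact ⟨aux_zero_Ici hcd.2.continuous hd0 t ht,
      aux_zero_Ici hcd2.2.continuous hdd0 t ht⟩

lemma exists_global_bound {G : ℝ → ℝ} (hG : Continuous G)
    (h0 : ∀ t : ℝ, (t ≤ 0 ∨ 1 ≤ t) → G t = 0) :
    ∃ M : ℝ, 0 ≤ M ∧ ∀ t, |G t| ≤ M := by
  obtain ⟨C, hC⟩ := (isCompact_Icc : IsCompact (Icc (0:ℝ) 1)).exists_bound_of_continuousOn
    hG.continuousOn
  refine ⟨max C 0, le_max_right _ _, fun t => ?_⟩
  by_cases h01 : t ∈ Icc (0:ℝ) 1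
  · exact le_trans (by simpa [Real.norm_eq_abs] using hC t h01) (le_max_left _ _)
  · have : G t = 0 := by
      rcases lt_or_ge t 0 with h | h
      · exact h0 t (Or.inl h.le)
      · exact h0 t (Or.inr (by by_contra hc; exact h01 ⟨h, le_of_not_gt (fun hlt => hc hlt.le)⟩))
    simp [this, le_max_right]


noncomputable def pf (f₁ f₂ : ℝ → ℝ) (x : ℝ × ℝ) : ℝ := x.2 - (f₁ x.1 + f₂ x.1) / 2
noncomputable def qf (f₂ : ℝ → ℝ) (x : ℝ × ℝ) : ℝ := f₂ x.1 - x.2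
noncomputable def hh (f₁ f₂ : ℝ → ℝ) (ε : ℝ) (x : ℝ × ℝ) : ℝ :=
  1 + ε * (Real.log (qf f₂ x) - Real.log (pf f₁ f₂ x))
noncomputable def bar' (f₁ f₂ : ℝ → ℝ) (t : ℝ) : ℝ := (deriv f₁ t + deriv f₂ t) / 2
noncomputable def h1f (f₁ f₂ : ℝ → ℝ) (ε : ℝ) (x : ℝ × ℝ) : ℝ :=
  ε * ((qf f₂ x)⁻¹ * deriv f₂ x.1 + (pf f₁ f₂ x)⁻¹ * bar' f₁ f₂ x.1)
noncomputable def h2f (f₁ f₂ : ℝ → ℝ) (ε : ℝ) (x : ℝ × ℝ) : ℝ :=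
  ε * (-(qf f₂ x)⁻¹ - (pf f₁ f₂ x)⁻¹)

lemma hasF_q {f₂ : ℝ → ℝ} (hf₂ : ContDiff ℝ (⊤ : ℕ∞) f₂) (x : ℝ × ℝ) :
    HasFDerivAt (qf f₂) ((deriv f₂ x.1) • fst ℝ ℝ ℝ - snd ℝ ℝ ℝ) x := by
  have h : HasFDerivAt (fun y : ℝ × ℝ => f₂ y.1) ((deriv f₂ x.1) • fst ℝ ℝ ℝ) x :=
    ((hf₂.differentiable (by simp) x.1).hasDerivAt).comp_hasFDerivAt x
      hasFDerivAt_fst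
  exact h.sub hasFDerivAt_snd

lemma hasF_p {f₁ f₂ : ℝ → ℝ} (hf₁ : ContDiff ℝ (⊤ : ℕ∞) f₁) (hf₂ : ContDiff ℝ (⊤ : ℕ∞) f₂)
    (x : ℝ × ℝ) : HasFDerivAt (pf f₁ f₂)
    (snd ℝ ℝ ℝ - (bar' f₁ f₂ x.1) • fst ℝ ℝ ℝ) x := by
  have hbar : HasDerivAt (fun t => (f₁ t + f₂ t) / 2) (bar' f₁ f₂ x.1) x.1 :=
    (((hf₁.differentiable (by simp) x.1).hasDerivAt).add
      ((hf₂.differentiable (by simp) x.1).hasDerivAt)).div_const 2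
  have h : HasFDerivAt (fun y : ℝ × ℝ => (f₁ y.1 + f₂ y.1) / 2)
      ((bar' f₁ f₂ x.1) • fst ℝ ℝ ℝ) x :=
    hbar.comp_hasFDerivAt x hasFDerivAt_fst
  exact hasFDerivAt_snd.sub h

lemma hasF_h {f₁ f₂ : ℝ → ℝ} (hf₁ : ContDiff ℝ (⊤ : ℕ∞) f₁) (hf₂ : ContDiff ℝ (⊤ : ℕ∞) f₂)
    {ε : ℝ} (x : ℝ × ℝ) (hp : pf f₁ f₂ x ≠ 0) (hq : qf f₂ x ≠ 0) :
    HasFDerivAt (hh f₁ f₂ ε)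
      (ε • ((qf f₂ x)⁻¹ • ((deriv f₂ x.1) • fst ℝ ℝ ℝ - snd ℝ ℝ ℝ) -
        (pf f₁ f₂ x)⁻¹ • (snd ℝ ℝ ℝ - (bar' f₁ f₂ x.1) • fst ℝ ℝ ℝ))) x :=
  ((((hasF_q hf₂ x).log hq).sub ((hasF_p hf₁ hf₂ x).log hp)).const_mul ε).const_add 1

/-- Eventual equality of `Gfun` with the smooth formula on `{p > 0, q > 0}`. -/
lemma Gfun_eventuallyEq {μ f₁ f₂ : ℝ → ℝ} (hf₁ : ContDiff ℝ (⊤ : ℕ∞) f₁)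
    (hf₂ : ContDiff ℝ (⊤ : ℕ∞) f₂) {ε Φ : ℝ} (x : ℝ × ℝ)
    (hp : 0 < pf f₁ f₂ x) (hq : 0 < qf f₂ x) :
    Gfun μ f₁ f₂ ε Φ =ᶠ[𝓝 x] fun y => Φ * μ (hh f₁ f₂ ε y) := by
  have hc1 : Continuous (pf f₁ f₂) :=
    continuous_snd.sub (((hf₁.continuous.comp continuous_fst).add
      (hf₂.continuous.comp continuous_fst)).div_const 2)
  have hc2 : Continuous (qf f₂) := (hf₂.continuous.comp continuous_fst).sub continuous_snd
  have hUopen : IsOpen {y : ℝ × ℝ | 0 < pf f₁ f₂ y ∧ 0 < qf f₂ y} :=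
    (isOpen_Ioi.preimage hc1).inter (isOpen_Ioi.preimage hc2)
  filter_upwards [hUopen.mem_nhds ⟨hp, hq⟩] with y hy
  have hpy : (0:ℝ) < pf f₁ f₂ y := hy.1
  have hqy : (0:ℝ) < qf f₂ y := hy.2
  have hval : (f₁ y.1 + f₂ y.1) / 2 < y.2 := by
    simpa [pf, sub_pos] using hpy
  rw [Gfun, if_pos hval]
  congr 2
  rw [show f₂ y.1 - y.2 = qf f₂ y from rfl,
    show y.2 - (f₁ y.1 + f₂ y.1) / 2 = pf f₁ f₂ y from rfl,
    Real.log_div hqy.ne' hpy.ne']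
  rfl

noncomputable def CLq (f₂ : ℝ → ℝ) (x : ℝ × ℝ) : ℝ × ℝ →L[ℝ] ℝ :=
  (deriv f₂ x.1) • fst ℝ ℝ ℝ - snd ℝ ℝ ℝ
noncomputable def CLp (f₁ f₂ : ℝ → ℝ) (x : ℝ × ℝ) : ℝ × ℝ →L[ℝ] ℝ :=
  snd ℝ ℝ ℝ - (bar' f₁ f₂ x.1) • fst ℝ ℝ ℝ
noncomputable def Dh (f₁ f₂ : ℝ → ℝ) (ε : ℝ) (x : ℝ × ℝ) : ℝ × ℝ →L[ℝ] ℝ :=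
  ε • ((qf f₂ x)⁻¹ • CLq f₂ x - (pf f₁ f₂ x)⁻¹ • CLp f₁ f₂ x)
noncomputable def bar2 (f₁ f₂ : ℝ → ℝ) (t : ℝ) : ℝ :=
  (deriv (deriv f₁) t + deriv (deriv f₂) t) / 2

lemma Dh_apply₁ {f₁ f₂ : ℝ → ℝ} {ε : ℝ} (x : ℝ × ℝ) :
    Dh f₁ f₂ ε x (1, 0) = h1f f₁ f₂ ε x := by
  simp only [Dh, CLq, CLp, ContinuousLinearMap.smul_apply, ContinuousLinearMap.sub_apply,
    ContinuousLinearMap.coe_fst', ContinuousLinearMap.coe_snd', h1f, smul_eq_mul]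
  ring

lemma Dh_apply₂ {f₁ f₂ : ℝ → ℝ} {ε : ℝ} (x : ℝ × ℝ) :
    Dh f₁ f₂ ε x (0, 1) = h2f f₁ f₂ ε x := by
  simp only [Dh, CLq, CLp, ContinuousLinearMap.smul_apply, ContinuousLinearMap.sub_apply,
    ContinuousLinearMap.coe_fst', ContinuousLinearMap.coe_snd', h2f, smul_eq_mul]
  ring

section vals
variable {μ f₁ f₂ : ℝ → ℝ} {ε Φ : ℝ}

lemma hasF_G (hμ1 : Differentiable ℝ μ) (hf₁ : ContDiff ℝ (⊤ : ℕ∞) f₁)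
    (hf₂ : ContDiff ℝ (⊤ : ℕ∞) f₂) (x : ℝ × ℝ)
    (hp : 0 < pf f₁ f₂ x) (hq : 0 < qf f₂ x) :
    HasFDerivAt (Gfun μ f₁ f₂ ε Φ)
      (Φ • ((deriv μ (hh f₁ f₂ ε x)) • Dh f₁ f₂ ε x)) x := by
  have h1 : HasFDerivAt (fun y => Φ * μ (hh f₁ f₂ ε y))
      (Φ • ((deriv μ (hh f₁ f₂ ε x)) • Dh f₁ f₂ ε x)) x :=
    HasFDerivAt.const_mul
      (((hμ1 _).hasDerivAt).comp_hasFDerivAt x (hasF_h hf₁ hf₂ x hp.ne' hq.ne')) Φ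
  exact h1.congr_of_eventuallyEq (Gfun_eventuallyEq hf₁ hf₂ x hp hq)

lemma gfun1_val (hμ1 : Differentiable ℝ μ) (hf₁ : ContDiff ℝ (⊤ : ℕ∞) f₁)
    (hf₂ : ContDiff ℝ (⊤ : ℕ∞) f₂) (x : ℝ × ℝ)
    (hp : 0 < pf f₁ f₂ x) (hq : 0 < qf f₂ x) :
    gfun₁ μ f₁ f₂ ε Φ x = Φ * (deriv μ (hh f₁ f₂ ε x) * h2f f₁ f₂ ε x) := by
  rw [gfun₁, (hasF_G hμ1 hf₁ hf₂ x hp hq).fderiv]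
  simp [Dh_apply₂]

lemma gfun2_val (hμ1 : Differentiable ℝ μ) (hf₁ : ContDiff ℝ (⊤ : ℕ∞) f₁)
    (hf₂ : ContDiff ℝ (⊤ : ℕ∞) f₂) (x : ℝ × ℝ)
    (hp : 0 < pf f₁ f₂ x) (hq : 0 < qf f₂ x) :
    gfun₂ μ f₁ f₂ ε Φ x = -(Φ * (deriv μ (hh f₁ f₂ ε x) * h1f f₁ f₂ ε x)) := by
  rw [gfun₂, (hasF_G hμ1 hf₁ hf₂ x hp hq).fderiv]
  simp [Dh_apply₁]

end vals

lemma U_open {f₁ f₂ : ℝ → ℝ} (hf₁ : ContDiff ℝ (⊤ : ℕ∞) f₁) (hf₂ : ContDiff ℝ (⊤ : ℕ∞) f₂) :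
    IsOpen {y : ℝ × ℝ | 0 < pf f₁ f₂ y ∧ 0 < qf f₂ y} := by
  have hc1 : Continuous (pf f₁ f₂) :=
    continuous_snd.sub (((hf₁.continuous.comp continuous_fst).add
      (hf₂.continuous.comp continuous_fst)).div_const 2)
  have hc2 : Continuous (qf f₂) := (hf₂.continuous.comp continuous_fst).sub continuous_snd
  exact (isOpen_Ioi.preimage hc1).inter (isOpen_Ioi.preimage hc2)

section vals2
variable {μ f₁ f₂ : ℝ → ℝ} {ε Φ : ℝ}

lemma hasF_qinv (hf₂ : ContDiff ℝ (⊤ : ℕ∞) f₂) (x : ℝ × ℝ) (hq : qf f₂ x ≠ 0) :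
    HasFDerivAt (fun y => (qf f₂ y)⁻¹) ((-(qf f₂ x ^ 2)⁻¹) • CLq f₂ x) x :=
  (hasDerivAt_inv hq).comp_hasFDerivAt x (hasF_q hf₂ x)

lemma hasF_pinv (hf₁ : ContDiff ℝ (⊤ : ℕ∞) f₁) (hf₂ : ContDiff ℝ (⊤ : ℕ∞) f₂) (x : ℝ × ℝ)
    (hp : pf f₁ f₂ x ≠ 0) :
    HasFDerivAt (fun y => (pf f₁ f₂ y)⁻¹) ((-(pf f₁ f₂ x ^ 2)⁻¹) • CLp f₁ f₂ x) x :=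
  (hasDerivAt_inv hp).comp_hasFDerivAt x (hasF_p hf₁ hf₂ x)

lemma hasF_h2f (hf₁ : ContDiff ℝ (⊤ : ℕ∞) f₁) (hf₂ : ContDiff ℝ (⊤ : ℕ∞) f₂) (x : ℝ × ℝ)
    (hp : pf f₁ f₂ x ≠ 0) (hq : qf f₂ x ≠ 0) :
    HasFDerivAt (h2f f₁ f₂ ε)
      (ε • (-((-(qf f₂ x ^ 2)⁻¹) • CLq f₂ x) - (-(pf f₁ f₂ x ^ 2)⁻¹) • CLp f₁ f₂ x)) x :=
  (((hasF_qinv hf₂ x hq).neg).sub (hasF_pinv hf₁ hf₂ x hp)).const_mul ε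

lemma hasF_df₂ (hf₂ : ContDiff ℝ (⊤ : ℕ∞) f₂) (x : ℝ × ℝ) :
    HasFDerivAt (fun y : ℝ × ℝ => deriv f₂ y.1) ((deriv (deriv f₂) x.1) • fst ℝ ℝ ℝ) x := by
  have hd : Differentiable ℝ (deriv f₂) :=
    (contDiff_infty_iff_deriv.mp hf₂).2.differentiable (by simp)
  exact ((hd x.1).hasDerivAt).comp_hasFDerivAt x hasFDerivAt_fst

lemma hasF_bar' (hf₁ : ContDiff ℝ (⊤ : ℕ∞) f₁) (hf₂ : ContDiff ℝ (⊤ : ℕ∞) f₂) (x : ℝ × ℝ) :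
    HasFDerivAt (fun y : ℝ × ℝ => bar' f₁ f₂ y.1) ((bar2 f₁ f₂ x.1) • fst ℝ ℝ ℝ) x := by
  have hd1 : Differentiable ℝ (deriv f₁) :=
    (contDiff_infty_iff_deriv.mp hf₁).2.differentiable (by simp)
  have hd2 : Differentiable ℝ (deriv f₂) :=
    (contDiff_infty_iff_deriv.mp hf₂).2.differentiable (by simp)
  have hbar : HasDerivAt (bar' f₁ f₂) (bar2 f₁ f₂ x.1) x.1 :=
    (((hd1 x.1).hasDerivAt).add ((hd2 x.1).hasDerivAt)).div_const 2
  exact hbar.comp_hasFDerivAt x hasFDerivAt_fst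

lemma hasF_h1f (hf₁ : ContDiff ℝ (⊤ : ℕ∞) f₁) (hf₂ : ContDiff ℝ (⊤ : ℕ∞) f₂) (x : ℝ × ℝ)
    (hp : pf f₁ f₂ x ≠ 0) (hq : qf f₂ x ≠ 0) :
    HasFDerivAt (h1f f₁ f₂ ε)
      (ε • (((qf f₂ x)⁻¹ • ((deriv (deriv f₂) x.1) • fst ℝ ℝ ℝ) +
              (deriv f₂ x.1) • ((-(qf f₂ x ^ 2)⁻¹) • CLq f₂ x)) +
            ((pf f₁ f₂ x)⁻¹ • ((bar2 f₁ f₂ x.1) • fst ℝ ℝ ℝ) +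
              (bar' f₁ f₂ x.1) • ((-(pf f₁ f₂ x ^ 2)⁻¹) • CLp f₁ f₂ x)))) x :=
  (((hasF_qinv hf₂ x hq).mul (hasF_df₂ hf₂ x)).add
    ((hasF_pinv hf₁ hf₂ x hp).mul (hasF_bar' hf₁ hf₂ x))).const_mul ε

end vals2

section vals3
variable {μ f₁ f₂ : ℝ → ℝ} {ε Φ : ℝ}

lemma hasF_gfun1 (hμ1 : Differentiable ℝ μ) (hμ2 : Differentiable ℝ (deriv μ))
    (hf₁ : ContDiff ℝ (⊤ : ℕ∞) f₁) (hf₂ : ContDiff ℝ (⊤ : ℕ∞) f₂) (x : ℝ × ℝ)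
    (hp : 0 < pf f₁ f₂ x) (hq : 0 < qf f₂ x) :
    HasFDerivAt (gfun₁ μ f₁ f₂ ε Φ)
      (Φ • ((deriv μ (hh f₁ f₂ ε x)) •
          (ε • (-((-(qf f₂ x ^ 2)⁻¹) • CLq f₂ x) - (-(pf f₁ f₂ x ^ 2)⁻¹) • CLp f₁ f₂ x)) +
        (h2f f₁ f₂ ε x) • ((deriv (deriv μ) (hh f₁ f₂ ε x)) • Dh f₁ f₂ ε x))) x := by
  have hA : HasFDerivAt (fun y => deriv μ (hh f₁ f₂ ε y))
      ((deriv (deriv μ) (hh f₁ f₂ ε x)) • Dh f₁ f₂ ε x) x :=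
    ((hμ2 _).hasDerivAt).comp_hasFDerivAt x (hasF_h hf₁ hf₂ x hp.ne' hq.ne')
  have hF : HasFDerivAt (fun y => Φ * (deriv μ (hh f₁ f₂ ε y) * h2f f₁ f₂ ε y))
      (Φ • ((deriv μ (hh f₁ f₂ ε x)) •
          (ε • (-((-(qf f₂ x ^ 2)⁻¹) • CLq f₂ x) - (-(pf f₁ f₂ x ^ 2)⁻¹) • CLp f₁ f₂ x)) +
        (h2f f₁ f₂ ε x) • ((deriv (deriv μ) (hh f₁ f₂ ε x)) • Dh f₁ f₂ ε x))) x :=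
    (hA.mul (hasF_h2f hf₁ hf₂ x hp.ne' hq.ne')).const_mul Φ
  refine hF.congr_of_eventuallyEq ?_
  filter_upwards [(U_open hf₁ hf₂).mem_nhds ⟨hp, hq⟩] with y hy
  exact gfun1_val hμ1 hf₁ hf₂ y hy.1 hy.2

lemma hasF_gfun2 (hμ1 : Differentiable ℝ μ) (hμ2 : Differentiable ℝ (deriv μ))
    (hf₁ : ContDiff ℝ (⊤ : ℕ∞) f₁) (hf₂ : ContDiff ℝ (⊤ : ℕ∞) f₂) (x : ℝ × ℝ)
    (hp : 0 < pf f₁ f₂ x) (hq : 0 < qf f₂ x) :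
    HasFDerivAt (gfun₂ μ f₁ f₂ ε Φ)
      (-(Φ • ((deriv μ (hh f₁ f₂ ε x)) •
          (ε • (((qf f₂ x)⁻¹ • ((deriv (deriv f₂) x.1) • fst ℝ ℝ ℝ) +
              (deriv f₂ x.1) • ((-(qf f₂ x ^ 2)⁻¹) • CLq f₂ x)) +
            ((pf f₁ f₂ x)⁻¹ • ((bar2 f₁ f₂ x.1) • fst ℝ ℝ ℝ) +
              (bar' f₁ f₂ x.1) • ((-(pf f₁ f₂ x ^ 2)⁻¹) • CLp f₁ f₂ x)))) +
        (h1f f₁ f₂ ε x) • ((deriv (deriv μ) (hh f₁ f₂ ε x)) • Dh f₁ f₂ ε x)))) x := by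
  have hA : HasFDerivAt (fun y => deriv μ (hh f₁ f₂ ε y))
      ((deriv (deriv μ) (hh f₁ f₂ ε x)) • Dh f₁ f₂ ε x) x :=
    ((hμ2 _).hasDerivAt).comp_hasFDerivAt x (hasF_h hf₁ hf₂ x hp.ne' hq.ne')
  have hF := (((hA.mul (hasF_h1f (ε := ε) hf₁ hf₂ x hp.ne' hq.ne')).const_mul Φ).neg)
  refine hF.congr_of_eventuallyEq ?_
  filter_upwards [(U_open hf₁ hf₂).mem_nhds ⟨hp, hq⟩] with y hy
  exact gfun2_val hμ1 hf₁ hf₂ y hy.1 hy.2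

lemma dgfun1_val₁ (hμ1 : Differentiable ℝ μ) (hμ2 : Differentiable ℝ (deriv μ))
    (hf₁ : ContDiff ℝ (⊤ : ℕ∞) f₁) (hf₂ : ContDiff ℝ (⊤ : ℕ∞) f₂) (x : ℝ × ℝ)
    (hp : 0 < pf f₁ f₂ x) (hq : 0 < qf f₂ x) :
    fderiv ℝ (gfun₁ μ f₁ f₂ ε Φ) x (1, 0) =
      Φ * (deriv μ (hh f₁ f₂ ε x) *
            (ε * ((qf f₂ x ^ 2)⁻¹ * deriv f₂ x.1 - (pf f₁ f₂ x ^ 2)⁻¹ * bar' f₁ f₂ x.1)) +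
          h2f f₁ f₂ ε x * (deriv (deriv μ) (hh f₁ f₂ ε x) * h1f f₁ f₂ ε x)) := by
  rw [(hasF_gfun1 hμ1 hμ2 hf₁ hf₂ x hp hq).fderiv]
  simp only [ContinuousLinearMap.smul_apply, ContinuousLinearMap.add_apply,
    ContinuousLinearMap.sub_apply, ContinuousLinearMap.neg_apply, Dh_apply₁,
    CLq, CLp, ContinuousLinearMap.coe_fst', ContinuousLinearMap.coe_snd', smul_eq_mul]
  ring

lemma dgfun1_val₂ (hμ1 : Differentiable ℝ μ) (hμ2 : Differentiable ℝ (deriv μ))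
    (hf₁ : ContDiff ℝ (⊤ : ℕ∞) f₁) (hf₂ : ContDiff ℝ (⊤ : ℕ∞) f₂) (x : ℝ × ℝ)
    (hp : 0 < pf f₁ f₂ x) (hq : 0 < qf f₂ x) :
    fderiv ℝ (gfun₁ μ f₁ f₂ ε Φ) x (0, 1) =
      Φ * (deriv μ (hh f₁ f₂ ε x) *
            (ε * ((pf f₁ f₂ x ^ 2)⁻¹ - (qf f₂ x ^ 2)⁻¹)) +
          h2f f₁ f₂ ε x * (deriv (deriv μ) (hh f₁ f₂ ε x) * h2f f₁ f₂ ε x)) := by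
  rw [(hasF_gfun1 hμ1 hμ2 hf₁ hf₂ x hp hq).fderiv]
  simp only [ContinuousLinearMap.smul_apply, ContinuousLinearMap.add_apply,
    ContinuousLinearMap.sub_apply, ContinuousLinearMap.neg_apply, Dh_apply₂,
    CLq, CLp, ContinuousLinearMap.coe_fst', ContinuousLinearMap.coe_snd', smul_eq_mul]
  ring

lemma dgfun2_val₁ (hμ1 : Differentiable ℝ μ) (hμ2 : Differentiable ℝ (deriv μ))
    (hf₁ : ContDiff ℝ (⊤ : ℕ∞) f₁) (hf₂ : ContDiff ℝ (⊤ : ℕ∞) f₂) (x : ℝ × ℝ)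
    (hp : 0 < pf f₁ f₂ x) (hq : 0 < qf f₂ x) :
    fderiv ℝ (gfun₂ μ f₁ f₂ ε Φ) x (1, 0) =
      -(Φ * (deriv μ (hh f₁ f₂ ε x) *
            (ε * ((qf f₂ x)⁻¹ * deriv (deriv f₂) x.1 - (qf f₂ x ^ 2)⁻¹ * (deriv f₂ x.1) ^ 2 +
              (pf f₁ f₂ x)⁻¹ * bar2 f₁ f₂ x.1 + (pf f₁ f₂ x ^ 2)⁻¹ * (bar' f₁ f₂ x.1) ^ 2)) +
          h1f f₁ f₂ ε x * (deriv (deriv μ) (hh f₁ f₂ ε x) * h1f f₁ f₂ ε x))) := by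
  rw [(hasF_gfun2 hμ1 hμ2 hf₁ hf₂ x hp hq).fderiv]
  simp only [ContinuousLinearMap.smul_apply, ContinuousLinearMap.add_apply,
    ContinuousLinearMap.sub_apply, ContinuousLinearMap.neg_apply, Dh_apply₁,
    CLq, CLp, ContinuousLinearMap.coe_fst', ContinuousLinearMap.coe_snd', smul_eq_mul]
  ring

lemma dgfun2_val₂ (hμ1 : Differentiable ℝ μ) (hμ2 : Differentiable ℝ (deriv μ))
    (hf₁ : ContDiff ℝ (⊤ : ℕ∞) f₁) (hf₂ : ContDiff ℝ (⊤ : ℕ∞) f₂) (x : ℝ × ℝ)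
    (hp : 0 < pf f₁ f₂ x) (hq : 0 < qf f₂ x) :
    fderiv ℝ (gfun₂ μ f₁ f₂ ε Φ) x (0, 1) =
      -(Φ * (deriv μ (hh f₁ f₂ ε x) *
            (ε * ((qf f₂ x ^ 2)⁻¹ * deriv f₂ x.1 - (pf f₁ f₂ x ^ 2)⁻¹ * bar' f₁ f₂ x.1)) +
          h1f f₁ f₂ ε x * (deriv (deriv μ) (hh f₁ f₂ ε x) * h2f f₁ f₂ ε x))) := by
  rw [(hasF_gfun2 hμ1 hμ2 hf₁ hf₂ x hp hq).fderiv]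
  simp only [ContinuousLinearMap.smul_apply, ContinuousLinearMap.add_apply,
    ContinuousLinearMap.sub_apply, ContinuousLinearMap.neg_apply, Dh_apply₂,
    CLq, CLp, ContinuousLinearMap.coe_fst', ContinuousLinearMap.coe_snd', smul_eq_mul]
  ring

end vals3

section zeroRegion
variable {μ f₁ f₂ : ℝ → ℝ} {ε Φ : ℝ}

lemma U0_open (hf₁ : ContDiff ℝ (⊤ : ℕ∞) f₁) (hf₂ : ContDiff ℝ (⊤ : ℕ∞) f₂) :
    IsOpen {y : ℝ × ℝ | 4 * y.2 < f₁ y.1 + 3 * f₂ y.1} := by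
  have hc : Continuous fun y : ℝ × ℝ => f₁ y.1 + 3 * f₂ y.1 - 4 * y.2 :=
    ((hf₁.continuous.comp continuous_fst).add
      ((continuous_const.mul (hf₂.continuous.comp continuous_fst)))).sub
      (continuous_const.mul continuous_snd)
  have : {y : ℝ × ℝ | 4 * y.2 < f₁ y.1 + 3 * f₂ y.1}
      = (fun y : ℝ × ℝ => f₁ y.1 + 3 * f₂ y.1 - 4 * y.2) ⁻¹' (Ioi 0) := by
    ext y; simp [sub_pos]
  rw [this]
  exact isOpen_Ioi.preimage hc

lemma Gfun_zero_on_U0 (hμ₀ : ∀ t : ℝ, 1 ≤ t → μ t = 0) (hε : 0 < ε) :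
    ∀ y : ℝ × ℝ, 4 * y.2 < f₁ y.1 + 3 * f₂ y.1 → Gfun μ f₁ f₂ ε Φ y = 0 := by
  intro y hy
  rw [Gfun]
  by_cases hcond : (f₁ y.1 + f₂ y.1) / 2 < y.2
  · rw [if_pos hcond]
    have hp : (0:ℝ) < y.2 - (f₁ y.1 + f₂ y.1) / 2 := by linarith
    have hq : y.2 - (f₁ y.1 + f₂ y.1) / 2 < f₂ y.1 - y.2 := by linarith
    have hrat : (1:ℝ) ≤ (f₂ y.1 - y.2) / (y.2 - (f₁ y.1 + f₂ y.1) / 2) :=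
      (one_le_div hp).mpr hq.le
    have hlog : 0 ≤ Real.log ((f₂ y.1 - y.2) / (y.2 - (f₁ y.1 + f₂ y.1) / 2)) :=
      Real.log_nonneg hrat
    have : (1:ℝ) ≤ 1 + ε * Real.log ((f₂ y.1 - y.2) / (y.2 - (f₁ y.1 + f₂ y.1) / 2)) := by
      nlinarith
    rw [hμ₀ _ this, mul_zero]
  · rw [if_neg hcond]

lemma zeros_on_U0 (hμ₀ : ∀ t : ℝ, 1 ≤ t → μ t = 0) (hε : 0 < ε)
    (hf₁ : ContDiff ℝ (⊤ : ℕ∞) f₁) (hf₂ : ContDiff ℝ (⊤ : ℕ∞) f₂)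
    (x : ℝ × ℝ) (hx : 4 * x.2 < f₁ x.1 + 3 * f₂ x.1) :
    gfun₁ μ f₁ f₂ ε Φ x = 0 ∧ gfun₂ μ f₁ f₂ ε Φ x = 0 ∧
    fderiv ℝ (gfun₁ μ f₁ f₂ ε Φ) x = 0 ∧ fderiv ℝ (gfun₂ μ f₁ f₂ ε Φ) x = 0 := by
  have hG1 : ∀ y : ℝ × ℝ, 4 * y.2 < f₁ y.1 + 3 * f₂ y.1 →
      gfun₁ μ f₁ f₂ ε Φ y = 0 ∧ gfun₂ μ f₁ f₂ ε Φ y = 0 := by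
    intro y hy
    have hev : Gfun μ f₁ f₂ ε Φ =ᶠ[𝓝 y] fun _ => (0:ℝ) := by
      filter_upwards [(U0_open hf₁ hf₂).mem_nhds hy] with z hz
      exact Gfun_zero_on_U0 hμ₀ hε z hz
    have hfd : fderiv ℝ (Gfun μ f₁ f₂ ε Φ) y = 0 := by
      rw [hev.fderiv_eq, fderiv_fun_const]; rfl
    constructor
    · rw [gfun₁, hfd]; rfl
    · rw [gfun₂, hfd]; simp
  have hev1 : gfun₁ μ f₁ f₂ ε Φ =ᶠ[𝓝 x] fun _ => (0:ℝ) := by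
    filter_upwards [(U0_open hf₁ hf₂).mem_nhds hx] with z hz
    exact (hG1 z hz).1
  have hev2 : gfun₂ μ f₁ f₂ ε Φ =ᶠ[𝓝 x] fun _ => (0:ℝ) := by
    filter_upwards [(U0_open hf₁ hf₂).mem_nhds hx] with z hz
    exact (hG1 z hz).2
  refine ⟨(hG1 x hx).1, (hG1 x hx).2, ?_, ?_⟩
  · rw [hev1.fderiv_eq, fderiv_fun_const]; rfl
  · rw [hev2.fderiv_eq, fderiv_fun_const]; rfl

end zeroRegion
noncomputable def CC1 (M₁ M₂ β γ : ℝ) : ℝ := 8 * (M₁ + M₂ + 1) * (β + γ + 1) ^ 2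
noncomputable def DD (f₁ f₂ : ℝ → ℝ) (ε : ℝ) (x : ℝ × ℝ) : ℝ :=
  4 * Real.exp ε⁻¹ / (f₂ x.1 - f₁ x.1)

lemma mul3_le {Φ E c C : ℝ} (hΦ : 0 ≤ Φ) (hE : 0 ≤ E) (h : c ≤ C) :
    Φ * c * E ≤ Φ * C * E :=
  mul_le_mul_of_nonneg_right (mul_le_mul_of_nonneg_left h hΦ) hE

lemma coeffs_le (M₁ M₂ β γ : ℝ) (hM₁0 : 0 ≤ M₁) (hM₂0 : 0 ≤ M₂)
    (hβ0 : 0 ≤ β) (hγ0 : 0 ≤ γ) :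
    2 * M₁ ≤ CC1 M₁ M₂ β γ ∧ 2 * M₁ * β ≤ CC1 M₁ M₂ β γ ∧
    2 * M₁ * β + 4 * M₂ * β ≤ CC1 M₁ M₂ β γ ∧
    2 * M₁ + 4 * M₂ ≤ CC1 M₁ M₂ β γ ∧
    2 * M₁ * γ + 2 * M₁ * β ^ 2 + 4 * M₂ * β ^ 2 ≤ CC1 M₁ M₂ β γ := by
  have hS1 : (1:ℝ) ≤ (β + γ + 1) ^ 2 := by nlinarith
  have hSβ : β ≤ (β + γ + 1) ^ 2 := by nlinarith
  have hSβ2 : β ^ 2 ≤ (β + γ + 1) ^ 2 := by nlinarith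
  have hSγ : γ ≤ (β + γ + 1) ^ 2 := by nlinarith
  unfold CC1
  refine ⟨?_, ?_, ?_, ?_, ?_⟩
  · nlinarith [mul_le_mul_of_nonneg_left hS1 hM₁0, mul_le_mul_of_nonneg_left hS1 hM₂0]
  · nlinarith [mul_le_mul_of_nonneg_left hSβ hM₁0, mul_le_mul_of_nonneg_left hS1 hM₂0]
  · nlinarith [mul_le_mul_of_nonneg_left hSβ hM₁0, mul_le_mul_of_nonneg_left hSβ hM₂0]
  · nlinarith [mul_le_mul_of_nonneg_left hS1 hM₁0, mul_le_mul_of_nonneg_left hS1 hM₂0]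
  · nlinarith [mul_le_mul_of_nonneg_left hSγ hM₁0, mul_le_mul_of_nonneg_left hSβ2 hM₁0,
      mul_le_mul_of_nonneg_left hSβ2 hM₂0]

lemma core_bound {μ f₁ f₂ : ℝ → ℝ} {ε Φ β γ d M₁ M₂ : ℝ}
    (hμ1 : Differentiable ℝ μ) (hμ2 : Differentiable ℝ (deriv μ))
    (hμz : ∀ t : ℝ, (t ≤ 0 ∨ 1 ≤ t) → deriv μ t = 0 ∧ deriv (deriv μ) t = 0)
    (hM₁ : ∀ t, |deriv μ t| ≤ M₁) (hM₂ : ∀ t, |deriv (deriv μ) t| ≤ M₂)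
    (hf₁ : ContDiff ℝ (⊤ : ℕ∞) f₁) (hf₂ : ContDiff ℝ (⊤ : ℕ∞) f₂)
    (hε : ε ∈ Ioo (0:ℝ) 1) (hΦ : 0 ≤ Φ)
    (hd : 0 < d) (hdf : ∀ t, d ≤ f₂ t - f₁ t)
    (hβ₁ : ∀ t, |deriv f₁ t| ≤ β) (hβ₂ : ∀ t, |deriv f₂ t| ≤ β)
    (hγ₁ : ∀ t, |deriv (deriv f₁) t * (f₂ t - f₁ t)| ≤ γ)
    (hγ₂ : ∀ t, |deriv (deriv f₂) t * (f₂ t - f₁ t)| ≤ γ)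
    (x : ℝ × ℝ) (hx2 : x.2 < f₂ x.1) (hmid : f₁ x.1 + 3 * f₂ x.1 ≤ 4 * x.2) :
    |gfun₁ μ f₁ f₂ ε Φ x| ≤ Φ * CC1 M₁ M₂ β γ * DD f₁ f₂ ε x ∧
    |gfun₂ μ f₁ f₂ ε Φ x| ≤ Φ * CC1 M₁ M₂ β γ * DD f₁ f₂ ε x ∧
    |fderiv ℝ (gfun₁ μ f₁ f₂ ε Φ) x (1, 0)| ≤ Φ * CC1 M₁ M₂ β γ * DD f₁ f₂ ε x ^ 2 ∧
    |fderiv ℝ (gfun₁ μ f₁ f₂ ε Φ) x (0, 1)| ≤ Φ * CC1 M₁ M₂ β γ * DD f₁ f₂ ε x ^ 2 ∧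
    |fderiv ℝ (gfun₂ μ f₁ f₂ ε Φ) x (1, 0)| ≤ Φ * CC1 M₁ M₂ β γ * DD f₁ f₂ ε x ^ 2 ∧
    |fderiv ℝ (gfun₂ μ f₁ f₂ ε Φ) x (0, 1)| ≤ Φ * CC1 M₁ M₂ β γ * DD f₁ f₂ ε x ^ 2 := by
  have hM₁0 : 0 ≤ M₁ := le_trans (abs_nonneg _) (hM₁ 0)
  have hM₂0 : 0 ≤ M₂ := le_trans (abs_nonneg _) (hM₂ 0)
  have hβ0 : 0 ≤ β := le_trans (abs_nonneg _) (hβ₁ 0)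
  have hγ0 : 0 ≤ γ := le_trans (abs_nonneg _) (hγ₁ 0)
  have hC0 : 0 ≤ CC1 M₁ M₂ β γ := by
    unfold CC1; positivity
  have hF : 0 < f₂ x.1 - f₁ x.1 := lt_of_lt_of_le hd (hdf x.1)
  have hD0 : 0 < DD f₁ f₂ ε x := by unfold DD; exact div_pos (by positivity) hF
  have hpF : (f₂ x.1 - f₁ x.1) / 4 ≤ pf f₁ f₂ x := by unfold pf; linarith
  have hp0 : 0 < pf f₁ f₂ x := lt_of_lt_of_le (by linarith) hpF
  have hq0 : 0 < qf f₂ x := by unfold qf; linarith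
  have hqp : qf f₂ x ≤ pf f₁ f₂ x := by unfold qf pf; linarith
  have hexp1 : (1:ℝ) ≤ Real.exp ε⁻¹ := Real.one_le_exp (inv_nonneg.mpr hε.1.le)
  have hpD : (pf f₁ f₂ x)⁻¹ ≤ DD f₁ f₂ ε x := by
    have h1 : (pf f₁ f₂ x)⁻¹ ≤ ((f₂ x.1 - f₁ x.1) / 4)⁻¹ := by
      apply inv_anti₀ (by positivity) hpF
    have h2 : ((f₂ x.1 - f₁ x.1) / 4)⁻¹ = 4 / (f₂ x.1 - f₁ x.1) := by
      rw [inv_div]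
    rw [h2] at h1
    refine h1.trans ?_
    unfold DD
    gcongr
    nlinarith
  rcases lt_or_ge (hh f₁ f₂ ε x) 0 with hcase | hcase
  · have hz := hμz (hh f₁ f₂ ε x) (Or.inl hcase.le)
    refine ⟨?_, ?_, ?_, ?_, ?_, ?_⟩
    · rw [gfun1_val hμ1 hf₁ hf₂ x hp0 hq0, hz.1]
      simp only [zero_mul, mul_zero, abs_zero]
      positivity
    · rw [gfun2_val hμ1 hf₁ hf₂ x hp0 hq0, hz.1]
      simp only [zero_mul, mul_zero, neg_zero, abs_zero]
      positivity
    · rw [dgfun1_val₁ hμ1 hμ2 hf₁ hf₂ x hp0 hq0, hz.1, hz.2]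
      simp only [zero_mul, mul_zero, add_zero, abs_zero]
      positivity
    · rw [dgfun1_val₂ hμ1 hμ2 hf₁ hf₂ x hp0 hq0, hz.1, hz.2]
      simp only [zero_mul, mul_zero, add_zero, abs_zero]
      positivity
    · rw [dgfun2_val₁ hμ1 hμ2 hf₁ hf₂ x hp0 hq0, hz.1, hz.2]
      simp only [zero_mul, mul_zero, add_zero, neg_zero, abs_zero]
      positivity
    · rw [dgfun2_val₂ hμ1 hμ2 hf₁ hf₂ x hp0 hq0, hz.1, hz.2]
      simp only [zero_mul, mul_zero, add_zero, neg_zero, abs_zero]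
      positivity

  · -- nontrivial case: 0 ≤ hh x, all quantities bounded
    set D := DD f₁ f₂ ε x with hDdef
    have h4F : (pf f₁ f₂ x)⁻¹ ≤ 4 / (f₂ x.1 - f₁ x.1) := by
      have h1 : (pf f₁ f₂ x)⁻¹ ≤ ((f₂ x.1 - f₁ x.1) / 4)⁻¹ := by
        apply inv_anti₀ (by positivity) hpF
      rwa [inv_div] at h1
    have hqD : (qf f₂ x)⁻¹ ≤ D := by
      have hlog : Real.log (pf f₁ f₂ x) - Real.log (qf f₂ x) ≤ ε⁻¹ := by
        have h' : -1 ≤ ε * (Real.log (qf f₂ x) - Real.log (pf f₁ f₂ x)) := by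
          have := hcase; unfold hh at this; linarith
        have h'' : ε * (Real.log (pf f₁ f₂ x) - Real.log (qf f₂ x)) ≤ 1 := by nlinarith
        rw [← one_div]
        exact (le_div_iff₀ hε.1).mpr (by linarith)
      have hdiv : pf f₁ f₂ x / qf f₂ x ≤ Real.exp ε⁻¹ := by
        have hl : Real.log (pf f₁ f₂ x / qf f₂ x) ≤ ε⁻¹ := by
          rw [Real.log_div hp0.ne' hq0.ne']; exact hlog
        calc pf f₁ f₂ x / qf f₂ x = Real.exp (Real.log (pf f₁ f₂ x / qf f₂ x)) :=
              (Real.exp_log (div_pos hp0 hq0)).symm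
          _ ≤ Real.exp ε⁻¹ := Real.exp_le_exp.mpr hl
      have heq : (qf f₂ x)⁻¹ = (pf f₁ f₂ x)⁻¹ * (pf f₁ f₂ x / qf f₂ x) := by
        field_simp
      rw [heq, hDdef]
      calc (pf f₁ f₂ x)⁻¹ * (pf f₁ f₂ x / qf f₂ x)
          ≤ (4 / (f₂ x.1 - f₁ x.1)) * Real.exp ε⁻¹ :=
            mul_le_mul h4F hdiv (by positivity) (by positivity)
        _ = DD f₁ f₂ ε x := by unfold DD; ring
    have hpDl : (pf f₁ f₂ x)⁻¹ ≤ D := hpD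
    have hq2 : (qf f₂ x ^ 2)⁻¹ ≤ D ^ 2 := by
      rw [← inv_pow]; exact pow_le_pow_left₀ (inv_nonneg.mpr hq0.le) hqD 2
    have hp2 : (pf f₁ f₂ x ^ 2)⁻¹ ≤ D ^ 2 := by
      rw [← inv_pow]; exact pow_le_pow_left₀ (inv_nonneg.mpr hp0.le) hpDl 2
    have hqabs : |(qf f₂ x)⁻¹| ≤ D := by rw [abs_of_nonneg (inv_nonneg.mpr hq0.le)]; exact hqD
    have hpabs : |(pf f₁ f₂ x)⁻¹| ≤ D := by rw [abs_of_nonneg (inv_nonneg.mpr hp0.le)]; exact hpDl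
    have hq2abs : |(qf f₂ x ^ 2)⁻¹| ≤ D ^ 2 := by
      rw [abs_of_nonneg (by positivity)]; exact hq2
    have hp2abs : |(pf f₁ f₂ x ^ 2)⁻¹| ≤ D ^ 2 := by
      rw [abs_of_nonneg (by positivity)]; exact hp2
    have hdf₂b : |deriv f₂ x.1| ≤ β := hβ₂ x.1
    have hbarb : |bar' f₁ f₂ x.1| ≤ β := by
      unfold bar'
      have h1 := hβ₁ x.1
      have h2 := hβ₂ x.1
      have := abs_add_le (deriv f₁ x.1) (deriv f₂ x.1)
      calc |(deriv f₁ x.1 + deriv f₂ x.1) / 2| = |deriv f₁ x.1 + deriv f₂ x.1| / 2 := by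
            rw [abs_div]; norm_num
        _ ≤ β := by linarith
    have hFinvD : (f₂ x.1 - f₁ x.1)⁻¹ ≤ D := by
      rw [hDdef]
      unfold DD
      rw [inv_eq_one_div]
      gcongr
      nlinarith
    have hd2f₂b : |deriv (deriv f₂) x.1| ≤ γ * D := by
      have h := hγ₂ x.1
      rw [abs_mul, abs_of_pos hF] at h
      have h' : |deriv (deriv f₂) x.1| ≤ γ / (f₂ x.1 - f₁ x.1) := (le_div_iff₀ hF).mpr h
      refine h'.trans ?_
      rw [div_eq_mul_inv]
      exact mul_le_mul_of_nonneg_left hFinvD hγ0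
    have hd2f₁b : |deriv (deriv f₁) x.1| ≤ γ * D := by
      have h := hγ₁ x.1
      rw [abs_mul, abs_of_pos hF] at h
      have h' : |deriv (deriv f₁) x.1| ≤ γ / (f₂ x.1 - f₁ x.1) := (le_div_iff₀ hF).mpr h
      refine h'.trans ?_
      rw [div_eq_mul_inv]
      exact mul_le_mul_of_nonneg_left hFinvD hγ0
    have hbar2b : |bar2 f₁ f₂ x.1| ≤ γ * D := by
      unfold bar2
      have := abs_add_le (deriv (deriv f₁) x.1) (deriv (deriv f₂) x.1)
      calc |(deriv (deriv f₁) x.1 + deriv (deriv f₂) x.1) / 2|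
          = |deriv (deriv f₁) x.1 + deriv (deriv f₂) x.1| / 2 := by rw [abs_div]; norm_num
        _ ≤ γ * D := by linarith
    have hεabs : |ε| ≤ 1 := by rw [abs_of_pos hε.1]; exact hε.2.le
    have habs_sub : ∀ a b : ℝ, |a - b| ≤ |a| + |b| := fun a b => by
      rw [sub_eq_add_neg]; exact (abs_add_le _ _).trans (by rw [abs_neg])
    have h1fb : |h1f f₁ f₂ ε x| ≤ 2 * β * D := by
      unfold h1f
      rw [abs_mul]
      have hsum : |(qf f₂ x)⁻¹ * deriv f₂ x.1 + (pf f₁ f₂ x)⁻¹ * bar' f₁ f₂ x.1|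
          ≤ D * β + D * β := by
        refine (abs_add_le _ _).trans ?_
        have e1 : |(qf f₂ x)⁻¹ * deriv f₂ x.1| ≤ D * β := by
          rw [abs_mul]; exact mul_le_mul hqabs hdf₂b (abs_nonneg _) hD0.le
        have e2 : |(pf f₁ f₂ x)⁻¹ * bar' f₁ f₂ x.1| ≤ D * β := by
          rw [abs_mul]; exact mul_le_mul hpabs hbarb (abs_nonneg _) hD0.le
        linarith
      calc |ε| * |(qf f₂ x)⁻¹ * deriv f₂ x.1 + (pf f₁ f₂ x)⁻¹ * bar' f₁ f₂ x.1|
          ≤ 1 * (D * β + D * β) := mul_le_mul hεabs hsum (abs_nonneg _) one_pos.le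
        _ = 2 * β * D := by ring
    have h2fb : |h2f f₁ f₂ ε x| ≤ 2 * D := by
      unfold h2f
      rw [abs_mul]
      have hsum : |-(qf f₂ x)⁻¹ - (pf f₁ f₂ x)⁻¹| ≤ D + D := by
        refine (habs_sub _ _).trans ?_
        rw [abs_neg]
        linarith
      calc |ε| * |-(qf f₂ x)⁻¹ - (pf f₁ f₂ x)⁻¹| ≤ 1 * (D + D) :=
            mul_le_mul hεabs hsum (abs_nonneg _) one_pos.le
        _ = 2 * D := by ring
    have key : ∀ A B C : ℝ,
        |Φ * (deriv μ (hh f₁ f₂ ε x) * A + B * (deriv (deriv μ) (hh f₁ f₂ ε x) * C))|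
          ≤ Φ * (M₁ * |A| + M₂ * (|B| * |C|)) := by
      intro A B C
      rw [abs_mul, abs_of_nonneg hΦ]
      refine mul_le_mul_of_nonneg_left ?_ hΦ
      have k1 := hM₁ (hh f₁ f₂ ε x)
      have k2 := hM₂ (hh f₁ f₂ ε x)
      calc |deriv μ (hh f₁ f₂ ε x) * A + B * (deriv (deriv μ) (hh f₁ f₂ ε x) * C)|
          ≤ |deriv μ (hh f₁ f₂ ε x) * A| + |B * (deriv (deriv μ) (hh f₁ f₂ ε x) * C)| :=
            abs_add_le _ _
        _ = |deriv μ (hh f₁ f₂ ε x)| * |A| +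
            |B| * (|deriv (deriv μ) (hh f₁ f₂ ε x)| * |C|) := by
            rw [abs_mul, abs_mul, abs_mul]
        _ ≤ M₁ * |A| + M₂ * (|B| * |C|) := by
            have kA := mul_le_mul_of_nonneg_right k1 (abs_nonneg A)
            have kC := mul_le_mul_of_nonneg_right k2 (abs_nonneg C)
            have kBC := mul_le_mul_of_nonneg_left kC (abs_nonneg B)
            have kr : |B| * (M₂ * |C|) = M₂ * (|B| * |C|) := by ring
            linarith [kA, kBC]
    obtain ⟨c1, c2, c3, c4, c5⟩ := coeffs_le M₁ M₂ β γ hM₁0 hM₂0 hβ0 hγ0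
    have hD2 : (0:ℝ) ≤ D ^ 2 := sq_nonneg D
    refine ⟨?_, ?_, ?_, ?_, ?_, ?_⟩
    · -- |g₁|
      rw [gfun1_val hμ1 hf₁ hf₂ x hp0 hq0, abs_mul, abs_mul, abs_of_nonneg hΦ]
      have step : |deriv μ (hh f₁ f₂ ε x)| * |h2f f₁ f₂ ε x| ≤ M₁ * (2 * D) :=
        mul_le_mul (hM₁ _) h2fb (abs_nonneg _) hM₁0
      calc Φ * (|deriv μ (hh f₁ f₂ ε x)| * |h2f f₁ f₂ ε x|) ≤ Φ * (M₁ * (2 * D)) :=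
            mul_le_mul_of_nonneg_left step hΦ
        _ = Φ * (2 * M₁) * D := by ring
        _ ≤ Φ * CC1 M₁ M₂ β γ * D := mul3_le hΦ hD0.le c1
    · -- |g₂|
      rw [gfun2_val hμ1 hf₁ hf₂ x hp0 hq0, abs_neg, abs_mul, abs_mul, abs_of_nonneg hΦ]
      have step : |deriv μ (hh f₁ f₂ ε x)| * |h1f f₁ f₂ ε x| ≤ M₁ * (2 * β * D) :=
        mul_le_mul (hM₁ _) h1fb (abs_nonneg _) hM₁0
      calc Φ * (|deriv μ (hh f₁ f₂ ε x)| * |h1f f₁ f₂ ε x|) ≤ Φ * (M₁ * (2 * β * D)) :=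
            mul_le_mul_of_nonneg_left step hΦ
        _ = Φ * (2 * M₁ * β) * D := by ring
        _ ≤ Φ * CC1 M₁ M₂ β γ * D := mul3_le hΦ hD0.le c2
    · -- |∂₁ g₁|
      rw [dgfun1_val₁ hμ1 hμ2 hf₁ hf₂ x hp0 hq0]
      refine (key _ _ _).trans ?_
      have hA : |ε * ((qf f₂ x ^ 2)⁻¹ * deriv f₂ x.1 - (pf f₁ f₂ x ^ 2)⁻¹ * bar' f₁ f₂ x.1)|
          ≤ 2 * β * D ^ 2 := by
        rw [abs_mul]
        have e1 : |(qf f₂ x ^ 2)⁻¹ * deriv f₂ x.1| ≤ D ^ 2 * β := by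
          rw [abs_mul]; exact mul_le_mul hq2abs hdf₂b (abs_nonneg _) hD2
        have e2 : |(pf f₁ f₂ x ^ 2)⁻¹ * bar' f₁ f₂ x.1| ≤ D ^ 2 * β := by
          rw [abs_mul]; exact mul_le_mul hp2abs hbarb (abs_nonneg _) hD2
        have hsum := (habs_sub ((qf f₂ x ^ 2)⁻¹ * deriv f₂ x.1)
          ((pf f₁ f₂ x ^ 2)⁻¹ * bar' f₁ f₂ x.1)).trans (add_le_add e1 e2)
        calc |ε| * |(qf f₂ x ^ 2)⁻¹ * deriv f₂ x.1 - (pf f₁ f₂ x ^ 2)⁻¹ * bar' f₁ f₂ x.1|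
            ≤ 1 * (D ^ 2 * β + D ^ 2 * β) := mul_le_mul hεabs hsum (abs_nonneg _) one_pos.le
          _ = 2 * β * D ^ 2 := by ring
      have hBC : |h2f f₁ f₂ ε x| * |h1f f₁ f₂ ε x| ≤ (2 * D) * (2 * β * D) :=
        mul_le_mul h2fb h1fb (abs_nonneg _) (by positivity)
      calc Φ * (M₁ * |ε * ((qf f₂ x ^ 2)⁻¹ * deriv f₂ x.1 -
              (pf f₁ f₂ x ^ 2)⁻¹ * bar' f₁ f₂ x.1)| +
            M₂ * (|h2f f₁ f₂ ε x| * |h1f f₁ f₂ ε x|))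
          ≤ Φ * (M₁ * (2 * β * D ^ 2) + M₂ * ((2 * D) * (2 * β * D))) :=
            mul_le_mul_of_nonneg_left (add_le_add
              (mul_le_mul_of_nonneg_left hA hM₁0)
              (mul_le_mul_of_nonneg_left hBC hM₂0)) hΦ
        _ = Φ * (2 * M₁ * β + 4 * M₂ * β) * D ^ 2 := by ring
        _ ≤ Φ * CC1 M₁ M₂ β γ * D ^ 2 := mul3_le hΦ hD2 c3
    · -- |∂₂ g₁|
      rw [dgfun1_val₂ hμ1 hμ2 hf₁ hf₂ x hp0 hq0]
      refine (key _ _ _).trans ?_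
      have hA : |ε * ((pf f₁ f₂ x ^ 2)⁻¹ - (qf f₂ x ^ 2)⁻¹)| ≤ 2 * D ^ 2 := by
        rw [abs_mul]
        have hsum := (habs_sub ((pf f₁ f₂ x ^ 2)⁻¹) ((qf f₂ x ^ 2)⁻¹)).trans
          (add_le_add hp2abs hq2abs)
        calc |ε| * |(pf f₁ f₂ x ^ 2)⁻¹ - (qf f₂ x ^ 2)⁻¹| ≤ 1 * (D ^ 2 + D ^ 2) :=
              mul_le_mul hεabs hsum (abs_nonneg _) one_pos.le
          _ = 2 * D ^ 2 := by ring
      have hBC : |h2f f₁ f₂ ε x| * |h2f f₁ f₂ ε x| ≤ (2 * D) * (2 * D) :=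
        mul_le_mul h2fb h2fb (abs_nonneg _) (by positivity)
      calc Φ * (M₁ * |ε * ((pf f₁ f₂ x ^ 2)⁻¹ - (qf f₂ x ^ 2)⁻¹)| +
            M₂ * (|h2f f₁ f₂ ε x| * |h2f f₁ f₂ ε x|))
          ≤ Φ * (M₁ * (2 * D ^ 2) + M₂ * ((2 * D) * (2 * D))) :=
            mul_le_mul_of_nonneg_left (add_le_add
              (mul_le_mul_of_nonneg_left hA hM₁0)
              (mul_le_mul_of_nonneg_left hBC hM₂0)) hΦ
        _ = Φ * (2 * M₁ + 4 * M₂) * D ^ 2 := by ring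
        _ ≤ Φ * CC1 M₁ M₂ β γ * D ^ 2 := mul3_le hΦ hD2 c4
    · -- |∂₁ g₂|
      rw [dgfun2_val₁ hμ1 hμ2 hf₁ hf₂ x hp0 hq0, abs_neg]
      refine (key _ _ _).trans ?_
      have hA : |ε * ((qf f₂ x)⁻¹ * deriv (deriv f₂) x.1 -
            (qf f₂ x ^ 2)⁻¹ * deriv f₂ x.1 ^ 2 +
            (pf f₁ f₂ x)⁻¹ * bar2 f₁ f₂ x.1 + (pf f₁ f₂ x ^ 2)⁻¹ * bar' f₁ f₂ x.1 ^ 2)|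
          ≤ (2 * γ + 2 * β ^ 2) * D ^ 2 := by
        rw [abs_mul]
        have e1 : |(qf f₂ x)⁻¹ * deriv (deriv f₂) x.1| ≤ D * (γ * D) := by
          rw [abs_mul]; exact mul_le_mul hqabs hd2f₂b (abs_nonneg _) hD0.le
        have e2 : |(qf f₂ x ^ 2)⁻¹ * deriv f₂ x.1 ^ 2| ≤ D ^ 2 * β ^ 2 := by
          rw [abs_mul]
          refine mul_le_mul hq2abs ?_ (abs_nonneg _) hD2
          rw [abs_pow]
          exact pow_le_pow_left₀ (abs_nonneg _) hdf₂b 2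
        have e3 : |(pf f₁ f₂ x)⁻¹ * bar2 f₁ f₂ x.1| ≤ D * (γ * D) := by
          rw [abs_mul]; exact mul_le_mul hpabs hbar2b (abs_nonneg _) hD0.le
        have e4 : |(pf f₁ f₂ x ^ 2)⁻¹ * bar' f₁ f₂ x.1 ^ 2| ≤ D ^ 2 * β ^ 2 := by
          rw [abs_mul]
          refine mul_le_mul hp2abs ?_ (abs_nonneg _) hD2
          rw [abs_pow]
          exact pow_le_pow_left₀ (abs_nonneg _) hbarb 2
        have hsum : |(qf f₂ x)⁻¹ * deriv (deriv f₂) x.1 -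
              (qf f₂ x ^ 2)⁻¹ * deriv f₂ x.1 ^ 2 +
              (pf f₁ f₂ x)⁻¹ * bar2 f₁ f₂ x.1 + (pf f₁ f₂ x ^ 2)⁻¹ * bar' f₁ f₂ x.1 ^ 2|
            ≤ (D * (γ * D) + D ^ 2 * β ^ 2) + D * (γ * D) + D ^ 2 * β ^ 2 := by
          refine (abs_add_le _ _).trans (add_le_add ?_ e4)
          refine (abs_add_le _ _).trans (add_le_add ?_ e3)
          exact (habs_sub _ _).trans (add_le_add e1 e2)
        calc |ε| * |(qf f₂ x)⁻¹ * deriv (deriv f₂) x.1 -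
              (qf f₂ x ^ 2)⁻¹ * deriv f₂ x.1 ^ 2 +
              (pf f₁ f₂ x)⁻¹ * bar2 f₁ f₂ x.1 + (pf f₁ f₂ x ^ 2)⁻¹ * bar' f₁ f₂ x.1 ^ 2|
            ≤ 1 * ((D * (γ * D) + D ^ 2 * β ^ 2) + D * (γ * D) + D ^ 2 * β ^ 2) :=
              mul_le_mul hεabs hsum (abs_nonneg _) one_pos.le
          _ = (2 * γ + 2 * β ^ 2) * D ^ 2 := by ring
      have hBC : |h1f f₁ f₂ ε x| * |h1f f₁ f₂ ε x| ≤ (2 * β * D) * (2 * β * D) :=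
        mul_le_mul h1fb h1fb (abs_nonneg _) (by positivity)
      calc Φ * (M₁ * |ε * ((qf f₂ x)⁻¹ * deriv (deriv f₂) x.1 -
              (qf f₂ x ^ 2)⁻¹ * deriv f₂ x.1 ^ 2 +
              (pf f₁ f₂ x)⁻¹ * bar2 f₁ f₂ x.1 + (pf f₁ f₂ x ^ 2)⁻¹ * bar' f₁ f₂ x.1 ^ 2)| +
            M₂ * (|h1f f₁ f₂ ε x| * |h1f f₁ f₂ ε x|))
          ≤ Φ * (M₁ * ((2 * γ + 2 * β ^ 2) * D ^ 2) + M₂ * ((2 * β * D) * (2 * β * D))) :=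
            mul_le_mul_of_nonneg_left (add_le_add
              (mul_le_mul_of_nonneg_left hA hM₁0)
              (mul_le_mul_of_nonneg_left hBC hM₂0)) hΦ
        _ = Φ * (2 * M₁ * γ + 2 * M₁ * β ^ 2 + 4 * M₂ * β ^ 2) * D ^ 2 := by ring
        _ ≤ Φ * CC1 M₁ M₂ β γ * D ^ 2 := mul3_le hΦ hD2 c5
    · -- |∂₂ g₂|
      rw [dgfun2_val₂ hμ1 hμ2 hf₁ hf₂ x hp0 hq0, abs_neg]
      refine (key _ _ _).trans ?_
      have hA : |ε * ((qf f₂ x ^ 2)⁻¹ * deriv f₂ x.1 - (pf f₁ f₂ x ^ 2)⁻¹ * bar' f₁ f₂ x.1)|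
          ≤ 2 * β * D ^ 2 := by
        rw [abs_mul]
        have e1 : |(qf f₂ x ^ 2)⁻¹ * deriv f₂ x.1| ≤ D ^ 2 * β := by
          rw [abs_mul]; exact mul_le_mul hq2abs hdf₂b (abs_nonneg _) hD2
        have e2 : |(pf f₁ f₂ x ^ 2)⁻¹ * bar' f₁ f₂ x.1| ≤ D ^ 2 * β := by
          rw [abs_mul]; exact mul_le_mul hp2abs hbarb (abs_nonneg _) hD2
        have hsum := (habs_sub ((qf f₂ x ^ 2)⁻¹ * deriv f₂ x.1)
          ((pf f₁ f₂ x ^ 2)⁻¹ * bar' f₁ f₂ x.1)).trans (add_le_add e1 e2)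
        calc |ε| * |(qf f₂ x ^ 2)⁻¹ * deriv f₂ x.1 - (pf f₁ f₂ x ^ 2)⁻¹ * bar' f₁ f₂ x.1|
            ≤ 1 * (D ^ 2 * β + D ^ 2 * β) := mul_le_mul hεabs hsum (abs_nonneg _) one_pos.le
          _ = 2 * β * D ^ 2 := by ring
      have hBC : |h1f f₁ f₂ ε x| * |h2f f₁ f₂ ε x| ≤ (2 * β * D) * (2 * D) :=
        mul_le_mul h1fb h2fb (abs_nonneg _) (by positivity)
      calc Φ * (M₁ * |ε * ((qf f₂ x ^ 2)⁻¹ * deriv f₂ x.1 -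
              (pf f₁ f₂ x ^ 2)⁻¹ * bar' f₁ f₂ x.1)| +
            M₂ * (|h1f f₁ f₂ ε x| * |h2f f₁ f₂ ε x|))
          ≤ Φ * (M₁ * (2 * β * D ^ 2) + M₂ * ((2 * β * D) * (2 * D))) :=
            mul_le_mul_of_nonneg_left (add_le_add
              (mul_le_mul_of_nonneg_left hA hM₁0)
              (mul_le_mul_of_nonneg_left hBC hM₂0)) hΦ
        _ = Φ * (2 * M₁ * β + 4 * M₂ * β) * D ^ 2 := by ring
        _ ≤ Φ * CC1 M₁ M₂ β γ * D ^ 2 := mul3_le hΦ hD2 c3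

def Tset (f₁ f₂ : ℝ → ℝ) (a b : ℝ) : Set (ℝ × ℝ) :=
  {y : ℝ × ℝ | a < y.1 ∧ y.1 < b ∧ f₁ y.1 + 3 * f₂ y.1 ≤ 4 * y.2 ∧ y.2 < f₂ y.1}

noncomputable def KB (M₁ M₂ β γ ε Φ : ℝ) : ℝ :=
  1024 * Real.exp ε⁻¹ ^ 4 * (CC1 M₁ M₂ β γ) ^ 2 * (1 + (CC1 M₁ M₂ β γ) ^ 2) * (Φ ^ 2 + Φ ^ 4)

lemma sq_le_of_abs_le {u v : ℝ} (h : |u| ≤ v) : u ^ 2 ≤ v ^ 2 := by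
  rw [← sq_abs]; exact pow_le_pow_left₀ (abs_nonneg _) h 2

lemma poly_step {C Φ : ℝ} (hC : 0 ≤ C) (hΦ : 0 ≤ Φ) :
    4 * (Φ * C) ^ 2 + 4 * (Φ * C) ^ 4 ≤ 4 * C ^ 2 * (1 + C ^ 2) * (Φ ^ 2 + Φ ^ 4) := by
  nlinarith [sq_nonneg (Φ * C), sq_nonneg Φ, sq_nonneg C, pow_nonneg hΦ 4, pow_nonneg hC 4,
    mul_nonneg (pow_nonneg hC 2) (pow_nonneg hΦ 4), mul_nonneg (pow_nonneg hC 4) (pow_nonneg hΦ 2)]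

lemma pointwise_bound {μ f₁ f₂ : ℝ → ℝ} {ε Φ β γ d M₁ M₂ a b : ℝ}
    (hμ1 : Differentiable ℝ μ) (hμ2 : Differentiable ℝ (deriv μ))
    (hμz : ∀ t : ℝ, (t ≤ 0 ∨ 1 ≤ t) → deriv μ t = 0 ∧ deriv (deriv μ) t = 0)
    (hμ₀ : ∀ t : ℝ, 1 ≤ t → μ t = 0)
    (hM₁ : ∀ t, |deriv μ t| ≤ M₁) (hM₂ : ∀ t, |deriv (deriv μ) t| ≤ M₂)
    (hf₁ : ContDiff ℝ (⊤ : ℕ∞) f₁) (hf₂ : ContDiff ℝ (⊤ : ℕ∞) f₂)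
    (hε : ε ∈ Ioo (0:ℝ) 1) (hΦ : 0 ≤ Φ)
    (hd : 0 < d) (hdf : ∀ t, d ≤ f₂ t - f₁ t)
    (hβ₁ : ∀ t, |deriv f₁ t| ≤ β) (hβ₂ : ∀ t, |deriv f₂ t| ≤ β)
    (hγ₁ : ∀ t, |deriv (deriv f₁) t * (f₂ t - f₁ t)| ≤ γ)
    (hγ₂ : ∀ t, |deriv (deriv f₂) t * (f₂ t - f₁ t)| ≤ γ)
    (x : ℝ × ℝ) (hx : x ∈ chan f₁ f₂ a b) :
    (fderiv ℝ (gfun₁ μ f₁ f₂ ε Φ) x (1, 0)) ^ 2 +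
      (fderiv ℝ (gfun₁ μ f₁ f₂ ε Φ) x (0, 1)) ^ 2 +
      (fderiv ℝ (gfun₂ μ f₁ f₂ ε Φ) x (1, 0)) ^ 2 +
      (fderiv ℝ (gfun₂ μ f₁ f₂ ε Φ) x (0, 1)) ^ 2 +
      ((gfun₁ μ f₁ f₂ ε Φ x) ^ 2 + (gfun₂ μ f₁ f₂ ε Φ x) ^ 2) ^ 2 ≤
    indicator (Tset f₁ f₂ a b)
      (fun y => KB M₁ M₂ β γ ε Φ * (((f₂ y.1 - f₁ y.1) ^ 4)⁻¹)) x := by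
  obtain ⟨hxa, hxb, hx1, hx2⟩ := hx
  have hM₁0 : 0 ≤ M₁ := le_trans (abs_nonneg _) (hM₁ 0)
  have hM₂0 : 0 ≤ M₂ := le_trans (abs_nonneg _) (hM₂ 0)
  have hC0 : 0 ≤ CC1 M₁ M₂ β γ := by unfold CC1; positivity
  have hF : 0 < f₂ x.1 - f₁ x.1 := lt_of_lt_of_le hd (hdf x.1)
  by_cases hmid : f₁ x.1 + 3 * f₂ x.1 ≤ 4 * x.2
  · -- x in the strip: use core_bound
    have hxT : x ∈ Tset f₁ f₂ a b := ⟨hxa, hxb, hmid, hx2⟩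
    rw [indicator_of_mem hxT]
    obtain ⟨b1, b2, b3, b4, b5, b6⟩ := core_bound hμ1 hμ2 hμz hM₁ hM₂ hf₁ hf₂ hε hΦ hd hdf
      hβ₁ hβ₂ hγ₁ hγ₂ x hx2 hmid
    have hD0 : 0 < DD f₁ f₂ ε x := by
      unfold DD; exact div_pos (by positivity) hF
    have hW0 : 0 ≤ Φ * CC1 M₁ M₂ β γ := mul_nonneg hΦ hC0
    have s3 := sq_le_of_abs_le b3
    have s4 := sq_le_of_abs_le b4
    have s5 := sq_le_of_abs_le b5
    have s6 := sq_le_of_abs_le b6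
    have s1 := sq_le_of_abs_le b1
    have s2 := sq_le_of_abs_le b2
    have s12 : ((gfun₁ μ f₁ f₂ ε Φ x) ^ 2 + (gfun₂ μ f₁ f₂ ε Φ x) ^ 2) ^ 2
        ≤ (2 * (Φ * CC1 M₁ M₂ β γ * DD f₁ f₂ ε x) ^ 2) ^ 2 := by
      have hsum : (gfun₁ μ f₁ f₂ ε Φ x) ^ 2 + (gfun₂ μ f₁ f₂ ε Φ x) ^ 2
          ≤ 2 * (Φ * CC1 M₁ M₂ β γ * DD f₁ f₂ ε x) ^ 2 := by linarith
      exact pow_le_pow_left₀ (by positivity) hsum 2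
    have htot : (fderiv ℝ (gfun₁ μ f₁ f₂ ε Φ) x (1, 0)) ^ 2 +
        (fderiv ℝ (gfun₁ μ f₁ f₂ ε Φ) x (0, 1)) ^ 2 +
        (fderiv ℝ (gfun₂ μ f₁ f₂ ε Φ) x (1, 0)) ^ 2 +
        (fderiv ℝ (gfun₂ μ f₁ f₂ ε Φ) x (0, 1)) ^ 2 +
        ((gfun₁ μ f₁ f₂ ε Φ x) ^ 2 + (gfun₂ μ f₁ f₂ ε Φ x) ^ 2) ^ 2
        ≤ (4 * (Φ * CC1 M₁ M₂ β γ) ^ 2 + 4 * (Φ * CC1 M₁ M₂ β γ) ^ 4) * DD f₁ f₂ ε x ^ 4 := by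
      have e : 4 * (Φ * CC1 M₁ M₂ β γ * DD f₁ f₂ ε x ^ 2) ^ 2 +
          (2 * (Φ * CC1 M₁ M₂ β γ * DD f₁ f₂ ε x) ^ 2) ^ 2 =
          (4 * (Φ * CC1 M₁ M₂ β γ) ^ 2 + 4 * (Φ * CC1 M₁ M₂ β γ) ^ 4) * DD f₁ f₂ ε x ^ 4 := by
        ring
      linarith
    refine htot.trans ?_
    have hD4 : DD f₁ f₂ ε x ^ 4 =
        256 * Real.exp ε⁻¹ ^ 4 * ((f₂ x.1 - f₁ x.1) ^ 4)⁻¹ := by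
      unfold DD
      rw [div_pow, div_eq_mul_inv]
      norm_num [mul_pow]
    rw [hD4]
    calc (4 * (Φ * CC1 M₁ M₂ β γ) ^ 2 + 4 * (Φ * CC1 M₁ M₂ β γ) ^ 4) *
          (256 * Real.exp ε⁻¹ ^ 4 * ((f₂ x.1 - f₁ x.1) ^ 4)⁻¹)
        ≤ (4 * (CC1 M₁ M₂ β γ) ^ 2 * (1 + (CC1 M₁ M₂ β γ) ^ 2) * (Φ ^ 2 + Φ ^ 4)) *
          (256 * Real.exp ε⁻¹ ^ 4 * ((f₂ x.1 - f₁ x.1) ^ 4)⁻¹) := by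
          refine mul_le_mul_of_nonneg_right (poly_step hC0 hΦ) ?_
          positivity
      _ = KB M₁ M₂ β γ ε Φ * ((f₂ x.1 - f₁ x.1) ^ 4)⁻¹ := by unfold KB; ring
  · -- below the strip: everything vanishes
    push_neg at hmid
    obtain ⟨z1, z2, z3, z4⟩ := zeros_on_U0 hμ₀ hε.1 hf₁ hf₂ x hmid
    rw [z1, z2, z3, z4]
    have : (0:ℝ × ℝ →L[ℝ] ℝ) (1, 0) = 0 := rfl
    have h2 : (0:ℝ × ℝ →L[ℝ] ℝ) (0, 1) = 0 := rfl
    rw [this, h2]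
    norm_num
    exact indicator_nonneg (fun y _ => by
      have hFy : 0 < f₂ y.1 - f₁ y.1 := lt_of_lt_of_le hd (hdf y.1)
      have : 0 ≤ KB M₁ M₂ β γ ε Φ := by unfold KB CC1; positivity
      positivity) x

/-- the integral bound
`∫_{Ω_{a,b}} (|∇g|² + |g|⁴) dx ≤ C(ε,γ) (Φ² + Φ⁴) ∫_a^b f(x₁)^{−3} dx₁`
under the additional assumption `max_i sup |f_i'' f| ≤ γ < ∞`. -/
theorem stmt_12 (μ : ℝ → ℝ)
    (hμsmooth : ContDiff ℝ (⊤ : ℕ∞) μ) (hμanti : Antitone μ)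
    (hμ₁ : ∀ t : ℝ, t ≤ 0 → μ t = 1) (hμ₀ : ∀ t : ℝ, 1 ≤ t → μ t = 0)
    (β : ℝ) (ε : ℝ) (hε : ε ∈ Ioo (0 : ℝ) 1) (γ : ℝ) (hγ : 0 ≤ γ) :
    ∃ Cγ : ℝ, 0 < Cγ ∧
      ∀ (f₁ f₂ : ℝ → ℝ) (d Φ : ℝ),
        ContDiff ℝ (⊤ : ℕ∞) f₁ → ContDiff ℝ (⊤ : ℕ∞) f₂ →
        0 < d → (∀ x₁ : ℝ, d ≤ f₂ x₁ - f₁ x₁) →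
        (∀ x₁ : ℝ, |deriv f₁ x₁| ≤ β) → (∀ x₁ : ℝ, |deriv f₂ x₁| ≤ β) →
        (∀ x₁ : ℝ, |deriv (deriv f₁) x₁ * (f₂ x₁ - f₁ x₁)| ≤ γ) →
        (∀ x₁ : ℝ, |deriv (deriv f₂) x₁ * (f₂ x₁ - f₁ x₁)| ≤ γ) →
        0 ≤ Φ →
        ∀ a b : ℝ, a < b →
          (∫ x in chan f₁ f₂ a b,
              ((fderiv ℝ (gfun₁ μ f₁ f₂ ε Φ) x (1, 0)) ^ 2 +
                (fderiv ℝ (gfun₁ μ f₁ f₂ ε Φ) x (0, 1)) ^ 2 +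
                (fderiv ℝ (gfun₂ μ f₁ f₂ ε Φ) x (1, 0)) ^ 2 +
                (fderiv ℝ (gfun₂ μ f₁ f₂ ε Φ) x (0, 1)) ^ 2 +
                ((gfun₁ μ f₁ f₂ ε Φ x) ^ 2 + (gfun₂ μ f₁ f₂ ε Φ x) ^ 2) ^ 2)) ≤
            Cγ * (Φ ^ 2 + Φ ^ 4) * ∫ x₁ in a..b, ((f₂ x₁ - f₁ x₁) ^ 3)⁻¹ := by
  -- μ facts
  have hcd := contDiff_infty_iff_deriv.mp hμsmooth
  have hcd2 := contDiff_infty_iff_deriv.mp hcd.2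
  have hμ1 : Differentiable ℝ μ := hcd.1
  have hμ2 : Differentiable ℝ (deriv μ) := hcd2.1
  have hμz := mu_derivs_zero hμsmooth hμ₁ hμ₀
  obtain ⟨M₁, hM₁0, hM₁⟩ := exists_global_bound hcd.2.continuous
    (fun t ht => (hμz t ht).1)
  obtain ⟨M₂, hM₂0, hM₂⟩ := exists_global_bound hcd2.2.continuous
    (fun t ht => (hμz t ht).2)
  set C := CC1 M₁ M₂ β γ with hCdef
  refine ⟨256 * Real.exp ε⁻¹ ^ 4 * C ^ 2 * (1 + C ^ 2) + 1, by positivity, ?_⟩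
  intro f₁ f₂ d Φ hf₁ hf₂ hd hdf hβ₁ hβ₂ hγ₁ hγ₂ hΦ a b hab
  have hβ0 : 0 ≤ β := le_trans (abs_nonneg _) (hβ₁ 0)
  have hFpos : ∀ t, 0 < f₂ t - f₁ t := fun t => lt_of_lt_of_le hd (hdf t)
  have hf₁c : Continuous f₁ := hf₁.continuous
  have hf₂c : Continuous f₂ := hf₂.continuous
  have hKB0 : 0 ≤ KB M₁ M₂ β γ ε Φ := by unfold KB; positivity
  -- measurability
  have hchan_meas : MeasurableSet (chan f₁ f₂ a b) := by
    have h1 : IsOpen {y : ℝ × ℝ | a < y.1} := isOpen_lt continuous_const continuous_fst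
    have h2 : IsOpen {y : ℝ × ℝ | y.1 < b} := isOpen_lt continuous_fst continuous_const
    have h3 : IsOpen {y : ℝ × ℝ | f₁ y.1 < y.2} :=
      isOpen_lt (hf₁c.comp continuous_fst) continuous_snd
    have h4 : IsOpen {y : ℝ × ℝ | y.2 < f₂ y.1} :=
      isOpen_lt continuous_snd (hf₂c.comp continuous_fst)
    have he : chan f₁ f₂ a b = {y : ℝ × ℝ | a < y.1} ∩
        ({y | y.1 < b} ∩ ({y | f₁ y.1 < y.2} ∩ {y | y.2 < f₂ y.1})) := rfl
    rw [he]
    exact (h1.inter (h2.inter (h3.inter h4))).measurableSet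
  have hT_meas : MeasurableSet (Tset f₁ f₂ a b) := by
    have h1 : IsOpen {y : ℝ × ℝ | a < y.1} := isOpen_lt continuous_const continuous_fst
    have h2 : IsOpen {y : ℝ × ℝ | y.1 < b} := isOpen_lt continuous_fst continuous_const
    have h3 : IsClosed {y : ℝ × ℝ | f₁ y.1 + 3 * f₂ y.1 ≤ 4 * y.2} :=
      isClosed_le ((hf₁c.comp continuous_fst).add
        (continuous_const.mul (hf₂c.comp continuous_fst)))
        (continuous_const.mul continuous_snd)
    have h4 : IsOpen {y : ℝ × ℝ | y.2 < f₂ y.1} :=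
      isOpen_lt continuous_snd (hf₂c.comp continuous_fst)
    have he : Tset f₁ f₂ a b = {y : ℝ × ℝ | a < y.1} ∩
        ({y | y.1 < b} ∩ ({y | f₁ y.1 + 3 * f₂ y.1 ≤ 4 * y.2} ∩ {y | y.2 < f₂ y.1})) := rfl
    rw [he]
    exact h1.measurableSet.inter (h2.measurableSet.inter
      (h3.measurableSet.inter h4.measurableSet))
  -- the bounding function and its integrability
  have hg_cont : Continuous (fun y : ℝ × ℝ => KB M₁ M₂ β γ ε Φ * ((f₂ y.1 - f₁ y.1) ^ 4)⁻¹) := by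
    refine continuous_const.mul (Continuous.inv₀ ?_ ?_)
    · exact ((hf₂c.comp continuous_fst).sub (hf₁c.comp continuous_fst)).pow 4
    · intro y; exact pow_ne_zero 4 (hFpos y.1).ne'
  obtain ⟨C₂, hC₂⟩ := (isCompact_Icc : IsCompact (Icc a b)).exists_bound_of_continuousOn
    hf₂c.continuousOn
  obtain ⟨Cl, hCl⟩ := (isCompact_Icc : IsCompact (Icc a b)).exists_bound_of_continuousOn
    (Continuous.continuousOn (by continuity : Continuous fun t => (f₁ t + 3 * f₂ t) / 4))
  have hTsub : Tset f₁ f₂ a b ⊆ Icc a b ×ˢ Icc (-(max C₂ Cl + 1)) (max C₂ Cl + 1) := by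
    rintro ⟨y1, y2⟩ ⟨hy1, hy2, hy3, hy4⟩
    have hy1' : y1 ∈ Icc a b := ⟨hy1.le, hy2.le⟩
    have h2 := hC₂ y1 hy1'
    have hl := hCl y1 hy1'
    rw [Real.norm_eq_abs] at h2 hl
    have h2' := abs_le.mp h2
    have hl' := abs_le.mp hl
    have hc2 := le_max_left C₂ Cl
    have hcl := le_max_right C₂ Cl
    exact ⟨hy1', by constructor <;> simp only [] <;> [linarith [hl'.1]; linarith [h2'.2]]⟩
  have hTfin : volume (Tset f₁ f₂ a b) ≠ ⊤ :=
    ne_of_lt (lt_of_le_of_lt (measure_mono hTsub)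
      ((isCompact_Icc.prod isCompact_Icc).measure_lt_top))
  have hBint : Integrable (indicator (Tset f₁ f₂ a b)
      (fun y : ℝ × ℝ => KB M₁ M₂ β γ ε Φ * ((f₂ y.1 - f₁ y.1) ^ 4)⁻¹)) := by
    rw [integrable_indicator_iff hT_meas]
    refine Measure.integrableOn_of_bounded (M := KB M₁ M₂ β γ ε Φ * (d ^ 4)⁻¹) hTfin
      hg_cont.aestronglyMeasurable ?_
    refine Eventually.of_forall fun y => ?_
    rw [Real.norm_eq_abs, abs_mul, abs_of_nonneg hKB0,
      abs_of_nonneg (by positivity : (0:ℝ) ≤ ((f₂ y.1 - f₁ y.1) ^ 4)⁻¹)]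
    refine mul_le_mul_of_nonneg_left ?_ hKB0
    refine inv_anti₀ (by positivity) ?_
    exact pow_le_pow_left₀ hd.le (hdf y.1) 4
  -- pointwise comparison and first inequality
  have hstep1 : (∫ x in chan f₁ f₂ a b,
      ((fderiv ℝ (gfun₁ μ f₁ f₂ ε Φ) x (1, 0)) ^ 2 +
        (fderiv ℝ (gfun₁ μ f₁ f₂ ε Φ) x (0, 1)) ^ 2 +
        (fderiv ℝ (gfun₂ μ f₁ f₂ ε Φ) x (1, 0)) ^ 2 +
        (fderiv ℝ (gfun₂ μ f₁ f₂ ε Φ) x (0, 1)) ^ 2 +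
        ((gfun₁ μ f₁ f₂ ε Φ x) ^ 2 + (gfun₂ μ f₁ f₂ ε Φ x) ^ 2) ^ 2)) ≤
      ∫ x, indicator (Tset f₁ f₂ a b)
        (fun y : ℝ × ℝ => KB M₁ M₂ β γ ε Φ * ((f₂ y.1 - f₁ y.1) ^ 4)⁻¹) x := by
    rw [← integral_indicator hchan_meas]
    refine integral_mono_of_nonneg ?_ hBint (Eventually.of_forall fun x => ?_)
    · refine Eventually.of_forall fun x => ?_
      refine indicator_nonneg (fun y _ => ?_) x
      positivity
    · by_cases hx : x ∈ chan f₁ f₂ a b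
      · rw [indicator_of_mem hx]
        exact pointwise_bound hμ1 hμ2 hμz hμ₀ hM₁ hM₂ hf₁ hf₂ hε hΦ hd hdf
          hβ₁ hβ₂ hγ₁ hγ₂ x hx
      · rw [indicator_of_notMem hx]
        refine indicator_nonneg (fun y _ => ?_) x
        have := hFpos y.1
        positivity
  -- Fubini and computation of the right-hand integral
  have hfub : (∫ x, indicator (Tset f₁ f₂ a b)
      (fun y : ℝ × ℝ => KB M₁ M₂ β γ ε Φ * ((f₂ y.1 - f₁ y.1) ^ 4)⁻¹) x) =
      ∫ x₁, ∫ x₂, indicator (Tset f₁ f₂ a b)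
        (fun y : ℝ × ℝ => KB M₁ M₂ β γ ε Φ * ((f₂ y.1 - f₁ y.1) ^ 4)⁻¹) (x₁, x₂) := by
    rw [Measure.volume_eq_prod]
    rw [Measure.volume_eq_prod] at hBint
    exact integral_prod _ hBint
  have hinner : ∀ x₁ : ℝ, (∫ x₂, indicator (Tset f₁ f₂ a b)
      (fun y : ℝ × ℝ => KB M₁ M₂ β γ ε Φ * ((f₂ y.1 - f₁ y.1) ^ 4)⁻¹) (x₁, x₂)) =
      indicator (Ioo a b)
        (fun t => KB M₁ M₂ β γ ε Φ * ((f₂ t - f₁ t) ^ 4)⁻¹ * ((f₂ t - f₁ t) / 4)) x₁ := by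
    intro x₁
    by_cases hx₁ : x₁ ∈ Ioo a b
    · rw [indicator_of_mem hx₁]
      have hslice : ∀ x₂ : ℝ, indicator (Tset f₁ f₂ a b)
          (fun y : ℝ × ℝ => KB M₁ M₂ β γ ε Φ * ((f₂ y.1 - f₁ y.1) ^ 4)⁻¹) (x₁, x₂) =
          indicator (Ico ((f₁ x₁ + 3 * f₂ x₁) / 4) (f₂ x₁))
            (fun _ => KB M₁ M₂ β γ ε Φ * ((f₂ x₁ - f₁ x₁) ^ 4)⁻¹) x₂ := by
        intro x₂
        by_cases hm : x₂ ∈ Ico ((f₁ x₁ + 3 * f₂ x₁) / 4) (f₂ x₁)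
        · rw [indicator_of_mem hm, indicator_of_mem]
          exact ⟨hx₁.1, hx₁.2, by linarith [hm.1], hm.2⟩
        · rw [indicator_of_notMem hm, indicator_of_notMem]
          intro hc
          exact hm ⟨by linarith [hc.2.2.1], hc.2.2.2⟩
      simp_rw [hslice]
      rw [integral_indicator measurableSet_Ico, setIntegral_const, Real.volume_real_Ico_of_le
          (by linarith [hFpos x₁] : (f₁ x₁ + 3 * f₂ x₁) / 4 ≤ f₂ x₁),
        smul_eq_mul]
      ring
    · rw [indicator_of_notMem hx₁]
      have hz : ∀ x₂ : ℝ, indicator (Tset f₁ f₂ a b)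
          (fun y : ℝ × ℝ => KB M₁ M₂ β γ ε Φ * ((f₂ y.1 - f₁ y.1) ^ 4)⁻¹) (x₁, x₂) = 0 := by
        intro x₂
        apply indicator_of_notMem
        intro hc
        exact hx₁ ⟨hc.1, hc.2.1⟩
      simp_rw [hz]
      simp
  have hIoo : (∫ x₁, indicator (Ioo a b)
      (fun t => KB M₁ M₂ β γ ε Φ * ((f₂ t - f₁ t) ^ 4)⁻¹ * ((f₂ t - f₁ t) / 4)) x₁) =
      ∫ x₁ in Ioo a b, KB M₁ M₂ β γ ε Φ * ((f₂ x₁ - f₁ x₁) ^ 4)⁻¹ * ((f₂ x₁ - f₁ x₁) / 4) :=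
    integral_indicator measurableSet_Ioo
  have hsimpl : (∫ x₁ in Ioo a b,
      KB M₁ M₂ β γ ε Φ * ((f₂ x₁ - f₁ x₁) ^ 4)⁻¹ * ((f₂ x₁ - f₁ x₁) / 4)) =
      ∫ x₁ in Ioo a b, (KB M₁ M₂ β γ ε Φ / 4) * ((f₂ x₁ - f₁ x₁) ^ 3)⁻¹ := by
    refine setIntegral_congr_fun measurableSet_Ioo fun t _ => ?_
    have h := hFpos t
    field_simp
  have hpull : (∫ x₁ in Ioo a b, (KB M₁ M₂ β γ ε Φ / 4) * ((f₂ x₁ - f₁ x₁) ^ 3)⁻¹) =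
      (KB M₁ M₂ β γ ε Φ / 4) * ∫ x₁ in Ioo a b, ((f₂ x₁ - f₁ x₁) ^ 3)⁻¹ :=
    integral_const_mul _ _
  have hIiint : (∫ x₁ in a..b, ((f₂ x₁ - f₁ x₁) ^ 3)⁻¹) =
      ∫ x₁ in Ioo a b, ((f₂ x₁ - f₁ x₁) ^ 3)⁻¹ := by
    rw [intervalIntegral.integral_of_le hab.le, integral_Ioc_eq_integral_Ioo]
  have hInn : 0 ≤ ∫ x₁ in Ioo a b, ((f₂ x₁ - f₁ x₁) ^ 3)⁻¹ :=
    setIntegral_nonneg measurableSet_Ioo fun t _ =>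
      inv_nonneg.mpr (pow_nonneg (hFpos t).le 3)
  have hKB4 : KB M₁ M₂ β γ ε Φ / 4 =
      (256 * Real.exp ε⁻¹ ^ 4 * C ^ 2 * (1 + C ^ 2)) * (Φ ^ 2 + Φ ^ 4) := by
    unfold KB
    rw [← hCdef]
    ring
  calc (∫ x in chan f₁ f₂ a b,
      ((fderiv ℝ (gfun₁ μ f₁ f₂ ε Φ) x (1, 0)) ^ 2 +
        (fderiv ℝ (gfun₁ μ f₁ f₂ ε Φ) x (0, 1)) ^ 2 +
        (fderiv ℝ (gfun₂ μ f₁ f₂ ε Φ) x (1, 0)) ^ 2 +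
        (fderiv ℝ (gfun₂ μ f₁ f₂ ε Φ) x (0, 1)) ^ 2 +
        ((gfun₁ μ f₁ f₂ ε Φ x) ^ 2 + (gfun₂ μ f₁ f₂ ε Φ x) ^ 2) ^ 2))
      ≤ ∫ x, indicator (Tset f₁ f₂ a b)
          (fun y : ℝ × ℝ => KB M₁ M₂ β γ ε Φ * ((f₂ y.1 - f₁ y.1) ^ 4)⁻¹) x := hstep1
    _ = (KB M₁ M₂ β γ ε Φ / 4) * ∫ x₁ in Ioo a b, ((f₂ x₁ - f₁ x₁) ^ 3)⁻¹ := by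
        rw [hfub]
        simp_rw [hinner]
        rw [hIoo, hsimpl, hpull]
    _ ≤ (256 * Real.exp ε⁻¹ ^ 4 * C ^ 2 * (1 + C ^ 2) + 1) * (Φ ^ 2 + Φ ^ 4) *
          ∫ x₁ in a..b, ((f₂ x₁ - f₁ x₁) ^ 3)⁻¹ := by
        rw [hIiint, hKB4]
        have hprod : 0 ≤ (Φ ^ 2 + Φ ^ 4) * ∫ x₁ in Ioo a b, ((f₂ x₁ - f₁ x₁) ^ 3)⁻¹ :=
          mul_nonneg (by positivity) hInn
        nlinarith [hprod]
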